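/- Suppose an n×n real Laplacian matrix L is k-block-ideal with respect to a k-way partition {I₁,...,I_k} of {1,...,n}, i.e., its matrix of k bottom eigenvectors satisfies V_k = P S for the 0/1 indicator matrix P = [1_{I₁},...,1_{I_k}] and an invertible k×k matrix S. Let Λ_k = diag(λ₁(L),...,λ_k(L)), let G(s) be diagonal with entries g_i(s), define ĝ_j(s) = (∑_{i∈I_j} g_i^{-1}(s))^{-1}, Ĝ(s) = diag(ĝ₁(s),...,ĝ_k(s)), and L_k = (S^{-1})^T Λ_k S^{-1}. Then for any s at which all inverses exist, V_k (V_k^T G^{-1}(s) V_k + f(s)Λ_k)^{-1} V_k^T = P (I_k + Ĝ(s) L_k f(s))^{-1} Ĝ(s) P^T. -/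

import Mathlib

open scoped Matrix Matrix.Norms.L2Operator

/-- for a k-block-ideal Laplacian, the rank-k transfer matrix is
realized by the structure-preserving reduced network of aggregated nodes. -/
theorem block_ideal_structure_preserving {n k : ℕ}
    (c : Fin n → Fin k)  -- block membership of the partition {I₁,...,I_k}
    (S : Matrix (Fin k) (Fin k) ℂ) (hS : IsUnit S)
    (lam : Fin k → ℝ)  -- bottom k eigenvalues of L
    (g : Fin n → ℂ) (hg : ∀ i, g i ≠ 0)
    (f : ℂ)
    -- the indicator matrix P = [1_{I₁},...,1_{I_k}]
    (P : Matrix (Fin n) (Fin k) ℂ)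
    (hP : P = Matrix.of fun i j => if c i = j then (1 : ℂ) else 0)
    -- V_k = P S  (k-block-ideal assumption)
    (Vk : Matrix (Fin n) (Fin k) ℂ) (hVk : Vk = P * S)
    (Λk : Matrix (Fin k) (Fin k) ℂ) (hΛk : Λk = (Matrix.diagonal lam).map Complex.ofReal)
    (Ginv : Matrix (Fin n) (Fin n) ℂ) (hGinv : Ginv = Matrix.diagonal fun i => (g i)⁻¹)
    -- aggregate dynamics ĝ_j = (∑_{i ∈ I_j} g_i⁻¹)⁻¹
    (Ghat : Matrix (Fin k) (Fin k) ℂ)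
    (hGhat : Ghat = Matrix.diagonal fun j => (∑ i, if c i = j then (g i)⁻¹ else 0)⁻¹)
    (hGhat0 : ∀ j, (∑ i, if c i = j then (g i)⁻¹ else 0) ≠ 0)
    -- reduced network Laplacian
    (Lk : Matrix (Fin k) (Fin k) ℂ) (hLk : Lk = (S⁻¹)ᵀ * Λk * S⁻¹)
    -- all the inverses involved exist
    (hinv1 : IsUnit (Vkᵀ * Ginv * Vk + f • Λk))
    (hinv2 : IsUnit (1 + f • (Ghat * Lk))) :
    Vk * (Vkᵀ * Ginv * Vk + f • Λk)⁻¹ * Vkᵀ =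
      P * (1 + f • (Ghat * Lk))⁻¹ * Ghat * Pᵀ := by
  -- D = Ghat⁻¹ : diagonal of block sums
  set D : Matrix (Fin k) (Fin k) ℂ :=
    Matrix.diagonal (fun j => ∑ i, if c i = j then (g i)⁻¹ else 0) with hD
  -- Pᵀ * Ginv * P = D
  have hPGP : Pᵀ * Ginv * P = D := by
    subst hP hGinv
    ext j j'
    simp only [Matrix.mul_apply, Matrix.transpose_apply, Matrix.diagonal_apply,
      Matrix.of_apply]
    simp only [mul_ite, mul_zero, mul_one, ite_mul, one_mul, zero_mul,
      Finset.sum_ite_eq', Finset.mem_univ, if_true, hD, Matrix.diagonal_apply]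
    by_cases h : j = j'
    · subst h
      simp only [if_pos rfl]
      apply Finset.sum_congr rfl
      intro i _
      by_cases hc : c i = j <;> simp [hc]
    · simp only [if_neg h]
      apply Finset.sum_eq_zero
      intro i _
      by_cases hc : c i = j
      · have : c i ≠ j' := by rw [hc]; exact h
        simp [hc, this, h]
      · simp [hc]
  have hSdet : IsUnit S.det := (Matrix.isUnit_iff_isUnit_det S).mp hS
  have hSinv : S * S⁻¹ = 1 := Matrix.mul_nonsing_inv S hSdet
  have hSinv' : S⁻¹ * S = 1 := Matrix.nonsing_inv_mul S hSdet
  -- D * Ghat = 1 and Ghat * D = 1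
  have hDG : D * Ghat = 1 := by
    rw [hD, hGhat, Matrix.diagonal_mul_diagonal]
    rw [← Matrix.diagonal_one]
    have : (fun j => (∑ i, if c i = j then (g i)⁻¹ else 0) *
        (∑ i, if c i = j then (g i)⁻¹ else 0)⁻¹) = fun _ => (1:ℂ) :=
      funext fun j => mul_inv_cancel₀ (hGhat0 j)
    rw [this]
  have hGD : Ghat * D = 1 := by
    rw [hD, hGhat, Matrix.diagonal_mul_diagonal]
    rw [← Matrix.diagonal_one]
    have : (fun j => (∑ i, if c i = j then (g i)⁻¹ else 0)⁻¹ *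
        (∑ i, if c i = j then (g i)⁻¹ else 0)) = fun _ => (1:ℂ) :=
      funext fun j => inv_mul_cancel₀ (hGhat0 j)
    rw [this]
  have hDinv : D⁻¹ = Ghat := Matrix.inv_eq_right_inv hDG
  -- A = D + f • Lk ; M = Sᵀ * A * S
  set A : Matrix (Fin k) (Fin k) ℂ := D + f • Lk with hA
  have hM : Vkᵀ * Ginv * Vk + f • Λk = Sᵀ * A * S := by
    have h1 : Vkᵀ * Ginv * Vk = Sᵀ * D * S := by
      rw [hVk, Matrix.transpose_mul]
      rw [show Sᵀ * Pᵀ * Ginv * (P * S) = Sᵀ * (Pᵀ * Ginv * P) * S by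
        simp only [Matrix.mul_assoc]]
      rw [hPGP]
    have h2 : Sᵀ * (f • Lk) * S = f • Λk := by
      rw [hLk]
      rw [Matrix.mul_smul, Matrix.smul_mul]
      congr 1
      calc Sᵀ * ((S⁻¹)ᵀ * Λk * S⁻¹) * S
          = (Sᵀ * (S⁻¹)ᵀ) * Λk * (S⁻¹ * S) := by simp only [Matrix.mul_assoc]
        _ = Λk := by
            rw [← Matrix.transpose_mul, hSinv', Matrix.transpose_one,
              Matrix.one_mul, Matrix.mul_one]
    rw [h1, hA, Matrix.mul_add, Matrix.add_mul, h2]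
  -- A = D * B with B = 1 + f • (Ghat * Lk)
  set B : Matrix (Fin k) (Fin k) ℂ := 1 + f • (Ghat * Lk) with hB
  have hADB : A = D * B := by
    rw [hA, hB, Matrix.mul_add, Matrix.mul_one, Matrix.mul_smul,
      ← Matrix.mul_assoc, hDG, Matrix.one_mul]
  have hAinv : A⁻¹ = B⁻¹ * Ghat := by
    rw [hADB, Matrix.mul_inv_rev, hDinv]
  have hMinv : (Vkᵀ * Ginv * Vk + f • Λk)⁻¹ = S⁻¹ * A⁻¹ * (Sᵀ)⁻¹ := by
    rw [hM, Matrix.mul_inv_rev, Matrix.mul_inv_rev, ← Matrix.mul_assoc]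
  calc Vk * (Vkᵀ * Ginv * Vk + f • Λk)⁻¹ * Vkᵀ
      = P * S * (S⁻¹ * A⁻¹ * (Sᵀ)⁻¹) * (Sᵀ * Pᵀ) := by
        rw [hMinv, hVk, Matrix.transpose_mul]
    _ = P * ((S * S⁻¹) * A⁻¹ * ((Sᵀ)⁻¹ * Sᵀ)) * Pᵀ := by
        simp only [Matrix.mul_assoc]
    _ = P * A⁻¹ * Pᵀ := by
        rw [hSinv, Matrix.one_mul, ← Matrix.transpose_nonsing_inv,
          ← Matrix.transpose_mul, hSinv, Matrix.transpose_one, Matrix.mul_one]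
    _ = P * (1 + f • (Ghat * Lk))⁻¹ * Ghat * Pᵀ := by
        rw [hAinv, ← hB]
        simp only [Matrix.mul_assoc]
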